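/- Let q = 3, so λ_3 = 1, I_3 = [−1/2, 1/2], and let f_3 be the Hurwitz–Nakada map. Then for every x ∈ (−1/2, 0): the preimage set {y ∈ I_3∖{0} : f_3(y) = x} equals {−1/(x+n) : n ∈ ℤ, n ≥ 3 or n ≤ −2}; moreover −1/(x+n) ∈ (−1/2, 0) for every n ≥ 3 and −1/(x+n) ∈ (0, 1/2) for every n ≤ −2, while −1/(x+n) ∉ I_3 for n ∈ {1, 2, −1} and −1/x ∉ I_3. -/
import Mathlib


/-- The modified floor `⌊t⌋′`: the unique integer `n` with `n < t ≤ n+1` if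
`t > 0`, and `n ≤ t < n+1` if `t ≤ 0`. -/
noncomputable def mfloor (t : ℝ) : ℤ := if 0 < t then ⌈t⌉ - 1 else ⌊t⌋

/-- The Hurwitz–Nakada map for `q = 3` (`λ_3 = 1`):
`f_3(x) = -1/x - ⌊-1/x + 1/2⌋′`, `f_3(0) = 0`. -/
noncomputable def f3 (x : ℝ) : ℝ :=
  if x = 0 then 0 else -1 / x - (mfloor (-1 / x + 1 / 2) : ℝ)

lemma mfloor_eq_of (t : ℝ) (n : ℤ) (h1 : (n : ℝ) < t) (h2 : t < (n : ℝ) + 1) :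
    mfloor t = n := by
  unfold mfloor
  split
  · have hc : ⌈t⌉ = n + 1 := by
      rw [Int.ceil_eq_iff]
      constructor <;> push_cast <;> linarith
    omega
  · have hf : ⌊t⌋ = n := by
      rw [Int.floor_eq_iff]
      constructor <;> push_cast <;> linarith
    omega

/-- for `q = 3`, for every `x ∈ (-1/2, 0)`: the `f_3`-preimage set
of `x` in `I_3 ∖ {0}` equals `{-1/(x+n) : n ≥ 3 or n ≤ -2}`; moreover
`-1/(x+n) ∈ (-1/2, 0)` for `n ≥ 3`, `-1/(x+n) ∈ (0, 1/2)` for `n ≤ -2`, while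
`-1/(x+n) ∉ I_3` for `n ∈ {1, 2, -1}` and `-1/x ∉ I_3`. -/
theorem stmt13 :
    ∀ x ∈ Set.Ioo (-(1 : ℝ) / 2) 0,
      ({y : ℝ | y ∈ Set.Icc (-(1 : ℝ) / 2) (1 / 2) ∧ y ≠ 0 ∧ f3 y = x} =
        {y : ℝ | ∃ n : ℤ, (3 ≤ n ∨ n ≤ -2) ∧ y = -1 / (x + (n : ℝ))}) ∧
      (∀ n : ℤ, 3 ≤ n → -1 / (x + (n : ℝ)) ∈ Set.Ioo (-(1 : ℝ) / 2) 0) ∧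
      (∀ n : ℤ, n ≤ -2 → -1 / (x + (n : ℝ)) ∈ Set.Ioo (0 : ℝ) (1 / 2)) ∧
      (∀ n : ℤ, n = 1 ∨ n = 2 ∨ n = -1 →
        -1 / (x + (n : ℝ)) ∉ Set.Icc (-(1 : ℝ) / 2) (1 / 2)) ∧
      -1 / x ∉ Set.Icc (-(1 : ℝ) / 2) (1 / 2) := by
  rintro x ⟨hx1, hx2⟩
  -- membership lemmas for the backward direction
  have hmem3 : ∀ n : ℤ, 3 ≤ n → -1 / (x + (n : ℝ)) ∈ Set.Ioo (-(1 : ℝ) / 2) 0 := by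
    intro n hn
    have hn' : (3 : ℝ) ≤ (n : ℝ) := by exact_mod_cast hn
    have hd : (2 : ℝ) < x + n := by linarith
    have hd0 : (0 : ℝ) < x + n := by linarith
    constructor
    · rw [div_lt_div_iff₀ (by norm_num) hd0]
      linarith
    · exact div_neg_of_neg_of_pos (by norm_num) hd0
  have hmem2 : ∀ n : ℤ, n ≤ -2 → -1 / (x + (n : ℝ)) ∈ Set.Ioo (0 : ℝ) (1 / 2) := by
    intro n hn
    have hn' : (n : ℝ) ≤ -2 := by exact_mod_cast hn
    have hd : x + (n : ℝ) < -2 := by linarith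
    have hd0 : x + (n : ℝ) < 0 := by linarith
    constructor
    · exact div_pos_of_neg_of_neg (by norm_num) hd0
    · rw [show -1 / (x + (n:ℝ)) = 1 / (-(x + (n:ℝ))) from by rw [div_neg, neg_div]]
      rw [div_lt_div_iff₀ (by linarith) (by norm_num : (0:ℝ) < 2)]
      linarith
  have hfwd : ∀ n : ℤ, (3 ≤ n ∨ n ≤ -2) → f3 (-1 / (x + (n : ℝ))) = x := by
    intro n hn
    have hd0 : x + (n : ℝ) ≠ 0 := by
      rcases hn with h | h
      · have : (3 : ℝ) ≤ (n : ℝ) := by exact_mod_cast h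
        intro hc; linarith
      · have : (n : ℝ) ≤ -2 := by exact_mod_cast h
        intro hc; linarith
    have hy0 : -1 / (x + (n : ℝ)) ≠ 0 := by
      simp [div_eq_zero_iff, hd0]
    unfold f3
    rw [if_neg hy0]
    have hinv : -1 / (-1 / (x + (n : ℝ))) = x + (n : ℝ) := by
      field_simp
    rw [hinv]
    have hm : mfloor (x + (n : ℝ) + 1 / 2) = n := by
      apply mfloor_eq_of <;> linarith
    rw [hm]
    ring
  refine ⟨?_, hmem3, hmem2, ?_, ?_⟩
  · ext y
    simp only [Set.mem_setOf_eq, Set.mem_Icc]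
    constructor
    · rintro ⟨⟨hyl, hyr⟩, hy0, hfy⟩
      unfold f3 at hfy
      rw [if_neg hy0] at hfy
      set n : ℤ := mfloor (-1 / y + 1 / 2) with hn
      have hsum : -1 / y = x + (n : ℝ) := by linarith
      have hprod : y * (x + (n : ℝ)) = -1 := by
        rw [← hsum]; field_simp
      have hd0 : x + (n : ℝ) ≠ 0 := by
        intro hc; rw [hc] at hprod; simp at hprod
      refine ⟨n, ?_, ?_⟩
      · rcases lt_or_gt_of_ne hy0 with hneg | hpos
        · left
          have h2 : (2 : ℝ) < (n : ℝ) := by nlinarith [hprod]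
          have : (2 : ℤ) < n := by exact_mod_cast h2
          omega
        · right
          have h2 : (n : ℝ) < -1 := by nlinarith [hprod]
          have : n < (-1 : ℤ) := by exact_mod_cast h2
          omega
      · rw [eq_div_iff hd0]
        linarith [hprod]
    · rintro ⟨n, hn, rfl⟩
      have hmem : -1 / (x + (n : ℝ)) ≠ 0 ∧ -(1:ℝ)/2 ≤ -1 / (x + (n : ℝ)) ∧ -1 / (x + (n : ℝ)) ≤ 1/2 := by
        rcases hn with h | h
        · obtain ⟨h1, h2⟩ := hmem3 n h
          exact ⟨ne_of_lt h2, le_of_lt h1, by linarith⟩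
        · obtain ⟨h1, h2⟩ := hmem2 n h
          exact ⟨ne_of_gt h1, by linarith, le_of_lt h2⟩
      exact ⟨⟨hmem.2.1, hmem.2.2⟩, hmem.1, hfwd n hn⟩
  · rintro n (rfl | rfl | rfl) ⟨h1, h2⟩ <;> push_cast at h1 h2
    · -- n = 1 : x+1 ∈ (1/2,1), y = -1/(x+1) < -1/2
      have hd : (0:ℝ) < x + 1 := by linarith
      have : -1 / (x + (1:ℝ)) < -(1:ℝ)/2 := by
        rw [div_lt_div_iff₀ hd (by norm_num)]
        linarith
      linarith
    · have hd : (0:ℝ) < x + 2 := by linarith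
      have : -1 / (x + (2:ℝ)) < -(1:ℝ)/2 := by
        rw [div_lt_div_iff₀ hd (by norm_num)]
        linarith
      linarith
    · have hd : x + (-1:ℝ) < 0 := by linarith
      have hprod := div_mul_cancel₀ (-1 : ℝ) (ne_of_lt hd)
      nlinarith [hprod]
  · rintro ⟨h1, h2⟩
    have hprod := div_mul_cancel₀ (-1 : ℝ) (ne_of_lt hx2)
    nlinarith [hprod]
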